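/- Let U(c) = Σ_{j=1}^n a_j (cλ_j)^α/(1+cλ_j)^{α+β} U_j, where a_j ∈ ℝ, λ_j > 0, α, β ≥ 0 are integers, and U_j are independent mean-zero random variables with Var(U_j) ≤ σ². Suppose for some γ, δ ∈ {0,1,2} and a function g ≥ 0, Σ_j a_j² (sλ_j)^δ/(1+sλ_j)^γ ≤ g(s) for all s > 0. Then there is a constant C (depending only on α, β, σ²) such that Var(U(s) − U(t)) ≤ C (s−t)² g(s)/s² for all 0 < s < t. -/

import Mathlib

open MeasureTheory ProbabilityTheory Finset

/-- Variance increment bound for the linear process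
`U(c) = Σ_j a_j (cλ_j)^α/(1+cλ_j)^{α+β} U_j` with independent mean-zero
variables `U_j` of variance at most `σ²`: if
`Σ_j a_j² (sλ_j)^δ/(1+sλ_j)^γ ≤ g(s)` for some `γ, δ ∈ {0,1,2}`, then
`Var(U(s) - U(t)) ≤ C (s-t)² g(s)/s²` for a constant `C` depending only on
`α, β, σ²`. -/
lemma aux_abs_pow_sub_pow (n : ℕ) {u p : ℝ} (hu0 : 0 ≤ u) (hu1 : u ≤ 1)
    (hp0 : 0 ≤ p) (hp1 : p ≤ 1) : |u ^ n - p ^ n| ≤ n * |u - p| := by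
  induction n with
  | zero => simp
  | succ n ih =>
    have h : u ^ (n+1) - p ^ (n+1) = u * (u ^ n - p ^ n) + p ^ n * (u - p) := by ring
    rw [h]
    calc |u * (u ^ n - p ^ n) + p ^ n * (u - p)|
        ≤ |u * (u ^ n - p ^ n)| + |p ^ n * (u - p)| := abs_add_le _ _
      _ ≤ 1 * |u ^ n - p ^ n| + 1 * |u - p| := by
          rw [abs_mul, abs_mul]
          gcongr
          · rw [abs_of_nonneg hu0]; exact hu1
          · rw [abs_of_nonneg (pow_nonneg hp0 n)]; exact pow_le_one₀ hp0 hp1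
      _ ≤ n * |u - p| + 1 * |u - p| := by
          rw [one_mul]
          gcongr
      _ = (n + 1 : ℕ) * |u - p| := by push_cast; ring

lemma aux_key_diff (α β : ℕ) {x y : ℝ} (hx : 0 < x) (hxy : x ≤ y) :
    |x ^ α / (1+x) ^ (α+β) - y ^ α / (1+y) ^ (α+β)|
      ≤ (α+β : ℝ) * (y-x) / ((1+x)*(1+y)) := by
  have hy : 0 < y := lt_of_lt_of_le hx hxy
  have h1x : (0:ℝ) < 1 + x := by linarith
  have h1y : (0:ℝ) < 1 + y := by linarith
  set u := x / (1+x) with hu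
  set v := 1 / (1+x) with hv
  set p := y / (1+y) with hp
  set q := 1 / (1+y) with hq
  have hu0 : 0 ≤ u := by positivity
  have hu1 : u ≤ 1 := by rw [hu, div_le_one h1x]; linarith
  have hp0 : 0 ≤ p := by positivity
  have hp1 : p ≤ 1 := by rw [hp, div_le_one h1y]; linarith
  have hv0 : 0 ≤ v := by positivity
  have hv1 : v ≤ 1 := by rw [hv, div_le_one h1x]; linarith
  have hq0 : 0 ≤ q := by positivity
  have hq1 : q ≤ 1 := by rw [hq, div_le_one h1y]; linarith
  have hfx : x ^ α / (1+x) ^ (α+β) = u ^ α * v ^ β := by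
    rw [hu, hv, div_pow, div_pow, div_mul_div_comm, one_pow, mul_one, pow_add]
  have hfy : y ^ α / (1+y) ^ (α+β) = p ^ α * q ^ β := by
    rw [hp, hq, div_pow, div_pow, div_mul_div_comm, one_pow, mul_one, pow_add]
  have hup : |u - p| = (y - x) / ((1+x)*(1+y)) := by
    have : u - p = -((y - x) / ((1+x)*(1+y))) := by
      rw [hu, hp]; field_simp; ring
    rw [this, abs_neg, abs_of_nonneg (div_nonneg (by linarith) (by positivity))]
  have hvq : |v - q| = (y - x) / ((1+x)*(1+y)) := by
    have : v - q = (y - x) / ((1+x)*(1+y)) := by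
      rw [hv, hq]; field_simp; ring
    rw [this, abs_of_nonneg (div_nonneg (by linarith) (by positivity))]
  have hsplit : u ^ α * v ^ β - p ^ α * q ^ β
      = (u ^ α - p ^ α) * v ^ β + p ^ α * (v ^ β - q ^ β) := by ring
  rw [hfx, hfy, hsplit]
  calc |(u ^ α - p ^ α) * v ^ β + p ^ α * (v ^ β - q ^ β)|
      ≤ |(u ^ α - p ^ α) * v ^ β| + |p ^ α * (v ^ β - q ^ β)| := abs_add_le _ _
    _ ≤ |u ^ α - p ^ α| * 1 + 1 * |v ^ β - q ^ β| := by
        rw [abs_mul, abs_mul]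
        gcongr
        · rw [abs_of_nonneg (pow_nonneg hv0 β)]; exact pow_le_one₀ hv0 hv1
        · rw [abs_of_nonneg (pow_nonneg hp0 α)]; exact pow_le_one₀ hp0 hp1
    _ ≤ (α : ℝ) * |u - p| + (β : ℝ) * |v - q| := by
        rw [mul_one, one_mul]
        gcongr
        · exact aux_abs_pow_sub_pow α hu0 hu1 hp0 hp1
        · exact aux_abs_pow_sub_pow β hv0 hv1 hq0 hq1
    _ = (α+β : ℝ) * (y-x) / ((1+x)*(1+y)) := by
        rw [hup, hvq]; field_simp

set_option maxHeartbeats 800000 in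
lemma aux_coeff_sq (α β γ δ : ℕ) (hγ : γ ≤ 2) (hδ : δ ≤ 2)
    {s t l : ℝ} (hs : 0 < s) (hst : s ≤ t) (hl : 0 < l) :
    ((s*l) ^ α / (1+s*l) ^ (α+β) - (t*l) ^ α / (1+t*l) ^ (α+β)) ^ 2
      ≤ ((α+β : ℝ))^2 * (t-s)^2 / s^2 * ((s*l) ^ δ / (1+s*l) ^ γ) := by
  set x := s * l with hx
  set y := t * l with hy
  have hxpos : 0 < x := by positivity
  have hxy : x ≤ y := by rw [hx, hy]; exact mul_le_mul_of_nonneg_right hst hl.le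
  have hypos : 0 < y := lt_of_lt_of_le hxpos hxy
  have h1x : (0:ℝ) < 1 + x := by linarith
  have h1y : (0:ℝ) < 1 + y := by linarith
  have hAnn : (0:ℝ) ≤ (α:ℝ) + β := by positivity
  have hB : |x ^ α / (1+x) ^ (α+β) - y ^ α / (1+y) ^ (α+β)|
      ≤ ((α:ℝ)+β) * (y-x) / ((1+x)*(1+x)) := by
    refine (aux_key_diff α β hxpos hxy).trans ?_
    have hnum : (0:ℝ) ≤ ((α:ℝ)+β) * (y-x) := mul_nonneg hAnn (by linarith)
    apply div_le_div_of_nonneg_left hnum (by positivity)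
    have : (0:ℝ) < 1 + x := h1x
    nlinarith
  have h2 : (x ^ α / (1+x) ^ (α+β) - y ^ α / (1+y) ^ (α+β)) ^ 2
      ≤ (((α:ℝ)+β) * (y-x) / ((1+x)*(1+x))) ^ 2 := by
    rw [← sq_abs]
    exact pow_le_pow_left₀ (abs_nonneg _) hB 2
  refine h2.trans ?_
  have hxx : x^δ * x^(2-δ) = x^2 := by rw [← pow_add]; congr 1; omega
  have hkey : x^2 * (1+x)^γ ≤ x^δ * (1+x)^4 := by
    calc x^2 * (1+x)^γ = x^δ * x^(2-δ) * (1+x)^γ := by rw [hxx]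
      _ ≤ x^δ * (1+x)^(2-δ) * (1+x)^γ := by
          gcongr
          all_goals first | positivity | linarith
      _ = x^δ * (1+x)^(2-δ+γ) := by rw [mul_assoc, ← pow_add]
      _ ≤ x^δ * (1+x)^4 := by
          gcongr
          · linarith
          · omega
  have hyx : y - x = (t - s) * l := by rw [hx, hy]; ring
  have hR : ((α:ℝ)+β)^2*(t-s)^2/s^2 * (x^δ/(1+x)^γ)
      = (((α:ℝ)+β)^2*(t-s)^2*x^δ)/(s^2*(1+x)^γ) := by
    rw [div_mul_div_comm]
  rw [div_pow, hR, div_le_div_iff₀ (by positivity) (by positivity), hyx]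
  have hexp : ((1+x)*(1+x))^2 = (1+x)^4 := by ring
  rw [hexp]
  have hx2 : x^2 = s^2*l^2 := by rw [hx]; ring
  have he1 : (((α:ℝ)+β)*((t-s)*l))^2 * (s^2*(1+x)^γ)
      = (((α:ℝ)+β)^2*(t-s)^2) * (x^2 * (1+x)^γ) := by rw [hx]; ring
  have he2 : (((α:ℝ)+β)^2*(t-s)^2) * (x^δ * (1+x)^4)
      = ((α:ℝ)+β)^2*(t-s)^2*x^δ * (1+x)^4 := by ring
  calc (((α:ℝ)+β)*((t-s)*l))^2 * (s^2*(1+x)^γ)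
      = (((α:ℝ)+β)^2*(t-s)^2) * (x^2 * (1+x)^γ) := he1
    _ ≤ (((α:ℝ)+β)^2*(t-s)^2) * (x^δ * (1+x)^4) :=
        mul_le_mul_of_nonneg_left hkey
          (mul_nonneg (sq_nonneg ((α:ℝ)+β)) (sq_nonneg (t-s)))
    _ = ((α:ℝ)+β)^2*(t-s)^2*x^δ * (1+x)^4 := he2

theorem variance_increment_bound
    {Ω : Type*} [MeasureSpace Ω] [IsProbabilityMeasure (ℙ : Measure Ω)]
    (n : ℕ) (a lam : Fin n → ℝ) (hlam : ∀ j, 0 < lam j)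
    (α β : ℕ) (U : Fin n → Ω → ℝ)
    (hmeas : ∀ j, Measurable (U j))
    (hindep : iIndepFun U ℙ)
    (hmean : ∀ j, ∫ ω, U j ω = 0)
    (hL2 : ∀ j, MemLp (U j) 2 ℙ)
    (σ2 : ℝ) (hvar : ∀ j, variance (U j) ℙ ≤ σ2)
    (γ δ : ℕ) (hγ : γ ≤ 2) (hδ : δ ≤ 2) (g : ℝ → ℝ) (hg0 : ∀ s, 0 ≤ g s)
    (hg : ∀ s : ℝ, 0 < s → ∑ j, (a j) ^ 2 * (s * lam j) ^ δ / (1 + s * lam j) ^ γ ≤ g s) :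
    ∃ C : ℝ, 0 < C ∧ (∀ s t : ℝ, 0 < s → s < t →
      variance (fun ω =>
        (∑ j, a j * (s * lam j) ^ α / (1 + s * lam j) ^ (α + β) * U j ω) -
        (∑ j, a j * (t * lam j) ^ α / (1 + t * lam j) ^ (α + β) * U j ω)) ℙ ≤
      C * (s - t) ^ 2 * g s / s ^ 2) := by
  classical
  set σ' : ℝ := max σ2 0 with hσ'
  have hσ'0 : 0 ≤ σ' := le_max_right _ _
  set K : ℝ := ((α : ℝ) + β) ^ 2 with hK
  have hK0 : 0 ≤ K := sq_nonneg _
  refine ⟨K * σ' + 1, by positivity, ?_⟩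
  intro s t hs hst
  have ht : 0 < t := hs.trans hst
  set e : Fin n → ℝ := fun j =>
    a j * (s * lam j) ^ α / (1 + s * lam j) ^ (α + β) -
    a j * (t * lam j) ^ α / (1 + t * lam j) ^ (α + β) with he
  have hfun : (fun ω =>
      (∑ j, a j * (s * lam j) ^ α / (1 + s * lam j) ^ (α + β) * U j ω) -
      (∑ j, a j * (t * lam j) ^ α / (1 + t * lam j) ^ (α + β) * U j ω))
      = ∑ j, (fun ω => e j * U j ω) := by
    ext ω
    rw [Finset.sum_apply]
    rw [← Finset.sum_sub_distrib]
    refine Finset.sum_congr rfl fun j _ => ?_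
    simp only [he]
    ring
  rw [hfun]
  rw [IndepFun.variance_sum (fun i _ => (hL2 i).const_mul (e i))
    (fun i _ j _ hij =>
      (hindep.indepFun hij).comp (measurable_const_mul (e i)) (measurable_const_mul (e j)))]
  have hvarsum : ∑ j, variance (fun ω => e j * U j ω) ℙ = ∑ j, (e j) ^ 2 * variance (U j) ℙ :=
    Finset.sum_congr rfl fun j _ => variance_const_mul (e j) (U j) ℙ
  rw [hvarsum]
  have hterm : ∀ j, (e j) ^ 2 * variance (U j) ℙ ≤
      σ' * (K * (t - s) ^ 2 / s ^ 2) * ((a j) ^ 2 * (s * lam j) ^ δ / (1 + s * lam j) ^ γ) := by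
    intro j
    have hc := aux_coeff_sq α β γ δ hγ hδ hs hst.le (hlam j)
    have hv : variance (U j) ℙ ≤ σ' := (hvar j).trans (le_max_left _ _)
    have he2 : (e j) ^ 2 = (a j) ^ 2 *
        ((s * lam j) ^ α / (1 + s * lam j) ^ (α + β) -
         (t * lam j) ^ α / (1 + t * lam j) ^ (α + β)) ^ 2 := by
      simp only [he]; ring
    calc (e j) ^ 2 * variance (U j) ℙ ≤ (e j) ^ 2 * σ' :=
          mul_le_mul_of_nonneg_left hv (sq_nonneg _)
      _ = (a j) ^ 2 * ((s * lam j) ^ α / (1 + s * lam j) ^ (α + β) -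
            (t * lam j) ^ α / (1 + t * lam j) ^ (α + β)) ^ 2 * σ' := by rw [he2]
      _ ≤ (a j) ^ 2 * (K * (t - s) ^ 2 / s ^ 2 *
            ((s * lam j) ^ δ / (1 + s * lam j) ^ γ)) * σ' := by
          gcongr
      _ = σ' * (K * (t - s) ^ 2 / s ^ 2) *
            ((a j) ^ 2 * (s * lam j) ^ δ / (1 + s * lam j) ^ γ) := by ring
  have hsum : ∑ j, (e j) ^ 2 * variance (U j) ℙ ≤
      σ' * (K * (t - s) ^ 2 / s ^ 2) * g s := by
    calc ∑ j, (e j) ^ 2 * variance (U j) ℙ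
        ≤ ∑ j, σ' * (K * (t - s) ^ 2 / s ^ 2) *
            ((a j) ^ 2 * (s * lam j) ^ δ / (1 + s * lam j) ^ γ) :=
          Finset.sum_le_sum fun j _ => hterm j
      _ = σ' * (K * (t - s) ^ 2 / s ^ 2) *
            ∑ j, (a j) ^ 2 * (s * lam j) ^ δ / (1 + s * lam j) ^ γ := by
          rw [Finset.mul_sum]
      _ ≤ σ' * (K * (t - s) ^ 2 / s ^ 2) * g s := by
          have hc0 : 0 ≤ σ' * (K * (t - s) ^ 2 / s ^ 2) := by positivity
          exact mul_le_mul_of_nonneg_left (hg s hs) hc0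
  refine hsum.trans ?_
  have hbase : 0 ≤ (t - s) ^ 2 * g s / s ^ 2 := by
    have := hg0 s; positivity
  have h1 : σ' * (K * (t - s) ^ 2 / s ^ 2) * g s = (K * σ') * ((t - s) ^ 2 * g s / s ^ 2) := by
    ring
  have h2 : (K * σ' + 1) * (s - t) ^ 2 * g s / s ^ 2
      = (K * σ' + 1) * ((t - s) ^ 2 * g s / s ^ 2) := by ring
  rw [h1, h2]
  exact mul_le_mul_of_nonneg_right (by linarith) hbase
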